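/- For every integer n ≥ 3, the polynomials f_n(y) = Σ_{k=0}^{⌊n/2⌋} P(n,k)·y^k satisfy the identity f_n(y) = f_{n-1}(y) + (n-1)·y·f_{n-2}(y) − y²·f'_{n-2}(y), where f' denotes the formal derivative. -/

import Mathlib

open Finset

/-- `(i, j)` is an arc of the linear representation of the set partition `P` of
`{1, ..., n}`: `i < j`, both lie in the same block, and no element of that block
lies strictly between them. -/
def IsArc {n : ℕ} (P : Finpartition (Finset.Icc 1 n)) (a : ℕ × ℕ) : Prop :=
  a.1 < a.2 ∧ ∃ B ∈ P.parts, a.1 ∈ B ∧ a.2 ∈ B ∧ ∀ c ∈ B, ¬ (a.1 < c ∧ c < a.2)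

/-- The number of arcs of a set partition. -/
noncomputable def numArcs {n : ℕ} (P : Finpartition (Finset.Icc 1 n)) : ℕ :=
  {a : ℕ × ℕ | IsArc P a}.ncard

/-- A partial matching: every block has at most two elements. -/
def IsMatching {n : ℕ} (P : Finpartition (Finset.Icc 1 n)) : Prop :=
  ∀ B ∈ P.parts, B.card ≤ 2

/-- A neighbor alignment: arcs `(i₁, j₁)`, `(i₂, j₂)` with `i₁ < j₁ < i₂ < j₂`
and `j₁ + 1 = i₂`. -/
def HasNbrAlign {n : ℕ} (P : Finpartition (Finset.Icc 1 n)) : Prop :=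
  ∃ a b : ℕ × ℕ, IsArc P a ∧ IsArc P b ∧ a.2 + 1 = b.1

/-- A left nesting: arcs `(i₁, j₁)`, `(i₂, j₂)` with `i₁ < i₂ < j₂ < j₁`
and `i₁ + 1 = i₂`. -/
def HasLeftNesting {n : ℕ} (P : Finpartition (Finset.Icc 1 n)) : Prop :=
  ∃ a b : ℕ × ℕ, IsArc P a ∧ IsArc P b ∧ a.1 + 1 = b.1 ∧ b.2 < a.2

/-- A right nesting: arcs `(i₁, j₁)`, `(i₂, j₂)` with `i₁ < i₂ < j₂ < j₁`
and `j₂ + 1 = j₁`. -/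
def HasRightNesting {n : ℕ} (P : Finpartition (Finset.Icc 1 n)) : Prop :=
  ∃ a b : ℕ × ℕ, IsArc P a ∧ IsArc P b ∧ a.1 < b.1 ∧ b.2 + 1 = a.2

/-- The number of left crossings: pairs of arcs `(i₁, j₁)`, `(i₂, j₂)` with
`i₁ < i₂ < j₁ < j₂` and `i₁ + 1 = i₂`. -/
noncomputable def numLeftCrossings {n : ℕ} (P : Finpartition (Finset.Icc 1 n)) : ℕ :=
  {p : (ℕ × ℕ) × (ℕ × ℕ) |
    IsArc P p.1 ∧ IsArc P p.2 ∧ p.1.1 + 1 = p.2.1 ∧ p.2.1 < p.1.2 ∧ p.1.2 < p.2.2}.ncard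

/-- The number of transients: elements of a block that are neither the minimum
nor the maximum of their block. -/
noncomputable def numTransients {n : ℕ} (P : Finpartition (Finset.Icc 1 n)) : ℕ :=
  {x : ℕ | ∃ B ∈ P.parts, x ∈ B ∧ (∃ y ∈ B, y < x) ∧ (∃ y ∈ B, x < y)}.ncard

/-- `Pnum n k`: the number of partial matchings of `[n]` with exactly `k` arcs
and no neighbor alignments. -/
noncomputable def Pnum (n k : ℕ) : ℕ :=
  {P : Finpartition (Finset.Icc 1 n) |
    IsMatching P ∧ numArcs P = k ∧ ¬ HasNbrAlign P}.ncard

/-- `Qnum n k`: the number of partial matchings of `[n]` with exactly `k` arcs,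
no neighbor alignments and no left nestings. -/
noncomputable def Qnum (n k : ℕ) : ℕ :=
  {P : Finpartition (Finset.Icc 1 n) |
    IsMatching P ∧ numArcs P = k ∧ ¬ HasNbrAlign P ∧ ¬ HasLeftNesting P}.ncard

/-- `Rnum n k`: the number of partial matchings of `[n]` with exactly `k` arcs,
no neighbor alignments, no left nestings and no right nestings. -/
noncomputable def Rnum (n k : ℕ) : ℕ :=
  {P : Finpartition (Finset.Icc 1 n) |
    IsMatching P ∧ numArcs P = k ∧ ¬ HasNbrAlign P ∧ ¬ HasLeftNesting P ∧
      ¬ HasRightNesting P}.ncard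

/-- `Tnum n k`: the number of set partitions of `[n]` with exactly `k` arcs and
no right nestings. -/
noncomputable def Tnum (n k : ℕ) : ℕ :=
  {P : Finpartition (Finset.Icc 1 n) | numArcs P = k ∧ ¬ HasRightNesting P}.ncard

/-- `Stirling m b`: the Stirling number of the second kind, the number of set
partitions of `{1, ..., m}` into `b` blocks. -/
noncomputable def Stirling (m b : ℕ) : ℕ :=
  {P : Finpartition (Finset.Icc 1 m) | P.parts.card = b}.ncard

open scoped Classical

----------------------------------------------------------------
-- Arc-set layer
----------------------------------------------------------------

def Good (n : ℕ) (A : Finset (ℕ × ℕ)) : Prop :=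
  (∀ p ∈ A, p.1 < p.2 ∧ 1 ≤ p.1 ∧ p.2 ≤ n) ∧
  ∀ p ∈ A, ∀ q ∈ A, p ≠ q → p.1 ≠ q.1 ∧ p.1 ≠ q.2 ∧ p.2 ≠ q.1 ∧ p.2 ≠ q.2

def NoNA (A : Finset (ℕ × ℕ)) : Prop := ∀ p ∈ A, ∀ q ∈ A, p.2 + 1 ≠ q.1

noncomputable def MSet (n k : ℕ) : Finset (Finset (ℕ × ℕ)) :=
  ((Finset.Icc 1 n ×ˢ Finset.Icc 1 n).powerset).filter
    (fun A => Good n A ∧ A.card = k ∧ NoNA A)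

lemma mem_MSet {n k : ℕ} {A : Finset (ℕ × ℕ)} :
    A ∈ MSet n k ↔ Good n A ∧ A.card = k ∧ NoNA A := by
  constructor
  · intro h; exact (mem_filter.1 h).2
  · intro h
    refine mem_filter.2 ⟨mem_powerset.2 ?_, h⟩
    intro p hp
    obtain ⟨h1, h2, h3⟩ := h.1.1 p hp
    exact mem_product.2 ⟨mem_Icc.2 ⟨h2, le_trans (le_of_lt h1) h3⟩,
      mem_Icc.2 ⟨le_trans h2 (le_of_lt h1), h3⟩⟩

noncomputable def arcsF {n : ℕ} (P : Finpartition (Finset.Icc 1 n)) : Finset (ℕ × ℕ) :=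
  ((Finset.Icc 1 n) ×ˢ (Finset.Icc 1 n)).filter (fun a => IsArc P a)

lemma mem_arcsF {n : ℕ} {P : Finpartition (Finset.Icc 1 n)} {a : ℕ × ℕ} :
    a ∈ arcsF P ↔ IsArc P a := by
  constructor
  · exact fun h => (mem_filter.1 h).2
  · intro h
    refine mem_filter.2 ⟨?_, h⟩
    obtain ⟨hlt, B, hB, h1, h2, _⟩ := h
    exact mem_product.2 ⟨P.le hB h1, P.le hB h2⟩

lemma numArcs_eq_card {n : ℕ} (P : Finpartition (Finset.Icc 1 n)) :
    numArcs P = (arcsF P).card := by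
  have : {a : ℕ × ℕ | IsArc P a} = ↑(arcsF P) := by
    ext a; simp [mem_arcsF]
  rw [numArcs, this, Set.ncard_coe_finset]

lemma pair_eq_pair {a b c d : ℕ} (hab : a < b) (hcd : c < d)
    (h : ({a, b} : Finset ℕ) = {c, d}) : a = c ∧ b = d := by
  have ha : a ∈ ({c, d} : Finset ℕ) := h ▸ (by simp)
  have hb : b ∈ ({c, d} : Finset ℕ) := h ▸ (by simp)
  have hc : c ∈ ({a, b} : Finset ℕ) := h ▸ (by simp)
  have hd : d ∈ ({a, b} : Finset ℕ) := h ▸ (by simp)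
  simp only [mem_insert, mem_singleton] at ha hb hc hd
  omega

lemma matching_arc_iff {n : ℕ} {P : Finpartition (Finset.Icc 1 n)}
    (hM : IsMatching P) {a : ℕ × ℕ} :
    IsArc P a ↔ a.1 < a.2 ∧ ({a.1, a.2} : Finset ℕ) ∈ P.parts := by
  constructor
  · rintro ⟨hlt, B, hB, h1, h2, _⟩
    refine ⟨hlt, ?_⟩
    have hsub : ({a.1, a.2} : Finset ℕ) ⊆ B := by
      intro x hx; simp only [mem_insert, mem_singleton] at hx
      rcases hx with rfl | rfl <;> assumption
    have hcard : 2 ≤ B.card := by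
      have : ({a.1, a.2} : Finset ℕ).card = 2 := by
        rw [card_insert_of_notMem (by simp [Nat.ne_of_lt hlt]), card_singleton]
      calc 2 = ({a.1, a.2} : Finset ℕ).card := this.symm
        _ ≤ B.card := card_le_card hsub
    have : ({a.1, a.2} : Finset ℕ) = B :=
      Finset.eq_of_subset_of_card_le hsub (le_trans (hM B hB) (by
        rw [card_insert_of_notMem (by simp [Nat.ne_of_lt hlt]), card_singleton]))
    rwa [this]
  · rintro ⟨hlt, hB⟩
    refine ⟨hlt, {a.1, a.2}, hB, by simp, by simp, ?_⟩
    intro c hc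
    simp only [mem_insert, mem_singleton] at hc
    rcases hc with rfl | rfl <;> omega

lemma parts_char {n : ℕ} {P : Finpartition (Finset.Icc 1 n)} (hM : IsMatching P)
    {B : Finset ℕ} :
    B ∈ P.parts ↔ (∃ p ∈ arcsF P, B = {p.1, p.2}) ∨
      (∃ x, x ∈ Finset.Icc 1 n ∧ B = {x} ∧ ∀ p ∈ arcsF P, p.1 ≠ x ∧ p.2 ≠ x) := by
  constructor
  · intro hB
    have hne : B ≠ ∅ := by
      intro h
      exact P.bot_notMem (show ⊥ ∈ P.parts by rw [Finset.bot_eq_empty]; exact h ▸ hB)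
    have hcard : B.card = 1 ∨ B.card = 2 := by
      have h1 : 1 ≤ B.card := card_pos.2 (nonempty_of_ne_empty hne)
      have h2 := hM B hB
      omega
    rcases hcard with h1 | h2
    · obtain ⟨x, rfl⟩ := card_eq_one.1 h1
      refine Or.inr ⟨x, P.le hB (by simp), rfl, ?_⟩
      intro p hp
      have harc := mem_arcsF.1 hp
      have hpp := (matching_arc_iff hM).1 harc
      constructor
      · rintro rfl
        have heq : ({p.1, p.2} : Finset ℕ) = {p.1} :=
          P.eq_of_mem_parts hpp.2 hB (show p.1 ∈ ({p.1, p.2} : Finset ℕ) by simp) (by simp)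
        have hmem : p.2 ∈ ({p.1} : Finset ℕ) := heq ▸ (by simp : p.2 ∈ ({p.1, p.2} : Finset ℕ))
        simp only [mem_singleton] at hmem
        omega
      · rintro rfl
        have heq : ({p.1, p.2} : Finset ℕ) = {p.2} :=
          P.eq_of_mem_parts hpp.2 hB (show p.2 ∈ ({p.1, p.2} : Finset ℕ) by simp) (by simp)
        have hmem : p.1 ∈ ({p.2} : Finset ℕ) := heq ▸ (by simp : p.1 ∈ ({p.1, p.2} : Finset ℕ))
        simp only [mem_singleton] at hmem
        omega
    · obtain ⟨a, b, hab, rfl⟩ := card_eq_two.1 h2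
      rcases Nat.lt_or_ge a b with h | h
      · refine Or.inl ⟨(a, b), mem_arcsF.2 ((matching_arc_iff hM).2 ⟨h, by simpa using hB⟩), rfl⟩
      · have h' : b < a := lt_of_le_of_ne h (Ne.symm hab)
        refine Or.inl ⟨(b, a), mem_arcsF.2 ((matching_arc_iff hM).2 ⟨h', ?_⟩), ?_⟩
        · have : ({a, b} : Finset ℕ) = {b, a} := by ext y; simp; tauto
          simpa using this ▸ hB
        · ext y; simp; tauto
  · rintro (⟨p, hp, rfl⟩ | ⟨x, hx, rfl, hnx⟩)
    · exact ((matching_arc_iff hM).1 (mem_arcsF.1 hp)).2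
    · obtain ⟨B', hB', hxB'⟩ := P.exists_mem hx
      have hcard : B'.card ≤ 2 := hM B' hB'
      have hne : B' ≠ ∅ := by
        intro h
        exact P.bot_notMem (show ⊥ ∈ P.parts by rw [Finset.bot_eq_empty]; exact h ▸ hB')
      have h1 : 1 ≤ B'.card := card_pos.2 (nonempty_of_ne_empty hne)
      rcases (by omega : B'.card = 1 ∨ B'.card = 2) with h | h
      · obtain ⟨y, rfl⟩ := card_eq_one.1 h
        simp only [mem_singleton] at hxB'
        subst hxB'; exact hB'
      · exfalso
        obtain ⟨a, b, hab, rfl⟩ := card_eq_two.1 h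
        rcases Nat.lt_or_ge a b with hlt | hge
        · have harc : (a, b) ∈ arcsF P :=
            mem_arcsF.2 ((matching_arc_iff hM).2 ⟨hlt, by simpa using hB'⟩)
          have := hnx _ harc
          simp only [mem_insert, mem_singleton] at hxB'
          rcases hxB' with rfl | rfl <;> simp_all
        · have hlt : b < a := lt_of_le_of_ne hge (Ne.symm hab)
          have hBeq : ({a, b} : Finset ℕ) = {b, a} := by ext y; simp; tauto
          have harc : (b, a) ∈ arcsF P :=
            mem_arcsF.2 ((matching_arc_iff hM).2 ⟨hlt, by simpa using hBeq ▸ hB'⟩)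
          have := hnx _ harc
          simp only [mem_insert, mem_singleton] at hxB'
          rcases hxB' with rfl | rfl <;> simp_all

lemma arcsF_injOn {n : ℕ} {P Q : Finpartition (Finset.Icc 1 n)}
    (hP : IsMatching P) (hQ : IsMatching Q) (h : arcsF P = arcsF Q) : P = Q := by
  apply Finpartition.ext
  ext B
  rw [parts_char hP, parts_char hQ, h]

noncomputable def endpts (A : Finset (ℕ × ℕ)) : Finset ℕ :=
  A.biUnion (fun p => {p.1, p.2})

noncomputable def partsOf (n : ℕ) (A : Finset (ℕ × ℕ)) : Finset (Finset ℕ) :=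
  A.image (fun p => ({p.1, p.2} : Finset ℕ)) ∪
    ((Finset.Icc 1 n) \ endpts A).image (fun x => {x})

lemma partsOf_le {n : ℕ} {A : Finset (ℕ × ℕ)} (hA : Good n A) :
    ∀ B ∈ partsOf n A, B ⊆ Finset.Icc 1 n := by
  intro B hB
  rcases mem_union.1 hB with h | h
  · obtain ⟨p, hp, rfl⟩ := mem_image.1 h
    obtain ⟨h1, h2, h3⟩ := hA.1 p hp
    intro y hy
    simp only [mem_insert, mem_singleton] at hy
    rcases hy with rfl | rfl <;> simp [mem_Icc] <;> omega
  · obtain ⟨x, hx, rfl⟩ := mem_image.1 h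
    intro y hy
    simp only [mem_singleton] at hy
    subst hy
    exact (mem_sdiff.1 hx).1

noncomputable def ofGood {n : ℕ} (A : Finset (ℕ × ℕ)) (hA : Good n A) :
    Finpartition (Finset.Icc 1 n) where
  parts := partsOf n A
  supIndep := by
    rw [Finset.supIndep_iff_pairwiseDisjoint]
    intro B hB C hC hne
    simp only [Set.mem_setOf_eq, Finset.mem_coe] at hB hC
    simp only [Function.onFun, id_eq]
    rw [Finset.disjoint_left]
    intro x hxB hxC
    apply hne
    rcases mem_union.1 hB with h | h <;> rcases mem_union.1 hC with h' | h'
    · obtain ⟨p, hp, rfl⟩ := mem_image.1 h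
      obtain ⟨q, hq, rfl⟩ := mem_image.1 h'
      by_cases hpq : p = q
      · subst hpq; rfl
      · exfalso
        have := hA.2 p hp q hq hpq
        simp only [mem_insert, mem_singleton] at hxB hxC
        rcases hxB with rfl | rfl <;> rcases hxC with h'' | h'' <;> omega
    · obtain ⟨p, hp, rfl⟩ := mem_image.1 h
      obtain ⟨y, hy, rfl⟩ := mem_image.1 h'
      exfalso
      simp only [mem_singleton] at hxC
      subst hxC
      have : x ∈ endpts A := mem_biUnion.2 ⟨p, hp, by simpa using hxB⟩
      exact (mem_sdiff.1 hy).2 this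
    · obtain ⟨y, hy, rfl⟩ := mem_image.1 h
      obtain ⟨p, hp, rfl⟩ := mem_image.1 h'
      exfalso
      simp only [mem_singleton] at hxB
      subst hxB
      have : x ∈ endpts A := mem_biUnion.2 ⟨p, hp, by simpa using hxC⟩
      exact (mem_sdiff.1 hy).2 this
    · obtain ⟨y, hy, rfl⟩ := mem_image.1 h
      obtain ⟨z, hz, rfl⟩ := mem_image.1 h'
      simp only [mem_singleton] at hxB hxC
      rw [← hxB, ← hxC]
  sup_parts := by
    apply le_antisymm
    · rw [Finset.sup_le_iff]
      intro B hB
      exact le_iff_subset.2 (partsOf_le hA B hB)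
    · intro x hx
      rw [Finset.mem_sup]
      by_cases hxe : x ∈ endpts A
      · obtain ⟨p, hp, hxp⟩ := mem_biUnion.1 hxe
        exact ⟨{p.1, p.2}, mem_union.2 (Or.inl (mem_image.2 ⟨p, hp, rfl⟩)), by simpa using hxp⟩
      · exact ⟨{x}, mem_union.2 (Or.inr (mem_image.2 ⟨x, mem_sdiff.2 ⟨hx, hxe⟩, rfl⟩)),
          by simp⟩
  bot_notMem := by
    intro h
    rw [Finset.bot_eq_empty] at h
    rcases mem_union.1 h with h' | h'
    · obtain ⟨p, hp, he⟩ := mem_image.1 h'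
      have : p.1 ∈ ({p.1, p.2} : Finset ℕ) := by simp
      rw [he] at this
      exact absurd this (notMem_empty _)
    · obtain ⟨x, hx, he⟩ := mem_image.1 h'
      have : x ∈ ({x} : Finset ℕ) := by simp
      rw [he] at this
      exact absurd this (notMem_empty _)

lemma ofGood_matching {n : ℕ} {A : Finset (ℕ × ℕ)} (hA : Good n A) :
    IsMatching (ofGood A hA) := by
  intro B hB
  rcases mem_union.1 hB with h | h
  · obtain ⟨p, hp, rfl⟩ := mem_image.1 h
    exact le_trans (card_insert_le _ _) (by simp)
  · obtain ⟨x, hx, rfl⟩ := mem_image.1 h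
    simp

lemma ofGood_arcsF {n : ℕ} {A : Finset (ℕ × ℕ)} (hA : Good n A) :
    arcsF (ofGood A hA) = A := by
  ext a
  rw [mem_arcsF, matching_arc_iff (ofGood_matching hA)]
  constructor
  · rintro ⟨hlt, hB⟩
    rcases mem_union.1 hB with h | h
    · obtain ⟨p, hp, he⟩ := mem_image.1 h
      have hplt := (hA.1 p hp).1
      obtain ⟨h1, h2⟩ := pair_eq_pair hplt hlt he
      have : a = p := Prod.ext h1.symm h2.symm
      rwa [this]
    · exfalso
      obtain ⟨x, hx, he⟩ := mem_image.1 h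
      have h1 : a.1 ∈ ({x} : Finset ℕ) := by rw [he]; simp
      have h2 : a.2 ∈ ({x} : Finset ℕ) := by rw [he]; simp
      simp only [mem_singleton] at h1 h2
      omega
  · intro ha
    exact ⟨(hA.1 a ha).1, mem_union.2 (Or.inl (mem_image.2 ⟨a, ha, rfl⟩))⟩

lemma arcsF_good {n : ℕ} {P : Finpartition (Finset.Icc 1 n)} (hM : IsMatching P) :
    Good n (arcsF P) := by
  constructor
  · intro p hp
    have h := mem_filter.1 hp
    have hsq := mem_product.1 h.1
    exact ⟨h.2.1, (mem_Icc.1 hsq.1).1, (mem_Icc.1 hsq.2).2⟩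
  · intro p hp q hq hpq
    have hp' := (matching_arc_iff hM).1 (mem_arcsF.1 hp)
    have hq' := (matching_arc_iff hM).1 (mem_arcsF.1 hq)
    have key : ∀ x, x ∈ ({p.1, p.2} : Finset ℕ) → x ∈ ({q.1, q.2} : Finset ℕ) → False := by
      intro x hx1 hx2
      have heq := P.eq_of_mem_parts hp'.2 hq'.2 hx1 hx2
      obtain ⟨h1, h2⟩ := pair_eq_pair hp'.1 hq'.1 heq
      exact hpq (Prod.ext h1 h2)
    refine ⟨?_, ?_, ?_, ?_⟩ <;> intro h <;>
      [exact key p.1 (by simp) (by simp [h]);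
       exact key p.1 (by simp) (by simp [h]);
       exact key p.2 (by simp) (by simp [h]);
       exact key p.2 (by simp) (by simp [h])]

lemma noNA_iff {n : ℕ} {P : Finpartition (Finset.Icc 1 n)} :
    NoNA (arcsF P) ↔ ¬ HasNbrAlign P := by
  constructor
  · rintro h ⟨a, b, ha, hb, hab⟩
    exact h a (mem_arcsF.2 ha) b (mem_arcsF.2 hb) hab
  · intro h p hp q hq hpq
    exact h ⟨p, q, mem_arcsF.1 hp, mem_arcsF.1 hq, hpq⟩

lemma Pnum_eq_card (n k : ℕ) : Pnum n k = (MSet n k).card := by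
  rw [Pnum]
  have himg : arcsF '' {P : Finpartition (Finset.Icc 1 n) |
      IsMatching P ∧ numArcs P = k ∧ ¬ HasNbrAlign P} = ↑(MSet n k) := by
    ext A
    simp only [Set.mem_image, Set.mem_setOf_eq, Finset.mem_coe]
    constructor
    · rintro ⟨P, ⟨hM, hk, hNA⟩, rfl⟩
      exact mem_MSet.2 ⟨arcsF_good hM, by rw [← numArcs_eq_card]; exact hk, noNA_iff.2 hNA⟩
    · intro hA
      obtain ⟨hG, hk, hNoNA⟩ := mem_MSet.1 hA
      refine ⟨ofGood A hG, ⟨ofGood_matching hG, ?_, ?_⟩, ofGood_arcsF hG⟩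
      · rw [numArcs_eq_card, ofGood_arcsF hG]; exact hk
      · rw [← noNA_iff, ofGood_arcsF hG]; exact hNoNA
  have hinj : Set.InjOn arcsF {P : Finpartition (Finset.Icc 1 n) |
      IsMatching P ∧ numArcs P = k ∧ ¬ HasNbrAlign P} := by
    intro P hP Q hQ h
    exact arcsF_injOn hP.1 hQ.1 h
  rw [← Set.ncard_image_of_injOn hinj, himg, Set.ncard_coe_finset]

----------------------------------------------------------------
-- relabeling maps
----------------------------------------------------------------

def rho (i x : ℕ) : ℕ := if x < i then x else x - 1
def sig (i x : ℕ) : ℕ := if x < i then x else x + 1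
def pmap (f : ℕ → ℕ) (p : ℕ × ℕ) : ℕ × ℕ := (f p.1, f p.2)

lemma rho_lt {i x y : ℕ} (hx : x ≠ i) (hy : y ≠ i) (h : x < y) : rho i x < rho i y := by
  unfold rho; split <;> split <;> omega

lemma rho_inj {i x y : ℕ} (hx : x ≠ i) (hy : y ≠ i) (h : rho i x = rho i y) : x = y := by
  unfold rho at h; split at h <;> split at h <;> omega

lemma rho_bounds {n i x : ℕ} (hi1 : 1 ≤ i) (hin : i ≤ n - 1) (hx1 : 1 ≤ x) (hxn : x ≤ n - 1) (hxi : x ≠ i) :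
    1 ≤ rho i x ∧ rho i x ≤ n - 2 := by
  unfold rho; split <;> omega

lemma rho_adj {i x y : ℕ} (hx : x ≠ i) (hy : y ≠ i) (h : rho i x + 1 = rho i y) :
    x + 1 = y ∨ (x + 1 = i ∧ y = i + 1) := by
  unfold rho at h; split at h <;> split at h <;> omega

lemma rho_not_adj_i {i y : ℕ} (hy : y ≠ i) (h : y + 1 ≠ i) : rho i y + 1 ≠ i := by
  unfold rho; split <;> omega

lemma sig_lt {i x y : ℕ} (h : x < y) : sig i x < sig i y := by
  unfold sig; split <;> split <;> omega

lemma sig_inj {i x y : ℕ} (h : sig i x = sig i y) : x = y := by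
  unfold sig at h; split at h <;> split at h <;> omega

lemma sig_bounds {n i x : ℕ} (hin : i ≤ n - 1) (hx1 : 1 ≤ x) (hxn : x ≤ n - 2) :
    1 ≤ sig i x ∧ sig i x ≤ n - 1 ∧ sig i x ≠ i := by
  unfold sig; split <;> omega

lemma sig_adj {i x y : ℕ} (h : sig i x + 1 = sig i y) : x + 1 = y := by
  unfold sig at h; split at h <;> split at h <;> omega

lemma sig_not_adj_i {i y : ℕ} (h : y + 1 ≠ i) : sig i y + 1 ≠ i := by
  unfold sig; split <;> omega

lemma sig_rho {i x : ℕ} (hx : x ≠ i) : sig i (rho i x) = x := by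
  unfold rho sig; split <;> (try split) <;> omega

lemma rho_sig (i x : ℕ) : rho i (sig i x) = x := by
  unfold rho sig; split <;> (try split) <;> omega

noncomputable def arcN (n : ℕ) (A : Finset (ℕ × ℕ)) : ℕ × ℕ :=
  if h : ∃ p ∈ A, p.2 = n then h.choose else (0, 0)

lemma arcN_spec {n : ℕ} {A : Finset (ℕ × ℕ)} (h : ∃ p ∈ A, p.2 = n) :
    arcN n A ∈ A ∧ (arcN n A).2 = n := by
  rw [arcN, dif_pos h]
  exact ⟨h.choose_spec.1, h.choose_spec.2⟩

noncomputable def slotsF (n : ℕ) (B : Finset (ℕ × ℕ)) : Finset ℕ :=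
  (Finset.Icc 1 (n - 1)).filter (fun i => ∀ p ∈ B, p.2 + 1 ≠ i)

lemma mem_slotsF {n i : ℕ} {B : Finset (ℕ × ℕ)} :
    i ∈ slotsF n B ↔ (1 ≤ i ∧ i ≤ n - 1) ∧ ∀ p ∈ B, p.2 + 1 ≠ i := by
  simp [slotsF, mem_Icc]

lemma pmap_sig_inj (i : ℕ) : Function.Injective (pmap (sig i)) := by
  intro a b h
  unfold pmap at h
  exact Prod.ext (sig_inj (congrArg Prod.fst h)) (sig_inj (congrArg Prod.snd h))

lemma erase_facts {n k : ℕ} {A : Finset (ℕ × ℕ)} (hA : A ∈ MSet n k)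
    {p : ℕ × ℕ} (hp : p ∈ A) (hp2 : p.2 = n) :
    ∀ q ∈ A.erase p, 1 ≤ q.1 ∧ q.1 < q.2 ∧ q.2 ≤ n - 1 ∧ q.1 ≠ p.1 ∧ q.2 ≠ p.1 := by
  obtain ⟨hG, hcard, hNA⟩ := mem_MSet.1 hA
  intro q hq'
  have hqA := mem_of_mem_erase hq'
  have hne := ne_of_mem_erase hq'
  have hd := hG.2 q hqA p hp hne
  have hb := hG.1 q hqA
  have hd4 : q.2 ≠ n := hp2 ▸ hd.2.2.2
  exact ⟨hb.2.1, hb.1, by omega, hd.1, hd.2.2.1⟩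

lemma fwd_mem {n k : ℕ} (hn : 2 ≤ n) {A : Finset (ℕ × ℕ)} (hA : A ∈ MSet n k)
    {p : ℕ × ℕ} (hp : p ∈ A) (hp2 : p.2 = n) :
    (A.erase p).image (pmap (rho p.1)) ∈ MSet (n - 2) (k - 1) ∧
      p.1 ∈ slotsF n ((A.erase p).image (pmap (rho p.1))) := by
  obtain ⟨hG, hcard, hNA⟩ := mem_MSet.1 hA
  have hi1 : 1 ≤ p.1 := (hG.1 p hp).2.1
  have hin : p.1 ≤ n - 1 := by
    have := (hG.1 p hp).1; omega
  have hq := erase_facts hA hp hp2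
  have hNAi : ∀ q ∈ A, q.2 + 1 ≠ p.1 := fun q hq' => hNA q hq' p hp
  constructor
  · rw [mem_MSet]
    refine ⟨⟨?_, ?_⟩, ?_, ?_⟩
    · intro q' hq'
      obtain ⟨q, hqe, rfl⟩ := mem_image.1 hq'
      obtain ⟨h1, h2, h3, h4, h5⟩ := hq q hqe
      exact ⟨rho_lt h4 h5 h2, (rho_bounds hi1 hin h1 (by omega) h4).1,
        (rho_bounds hi1 hin (by omega) h3 h5).2⟩
    · intro q' hq' r' hr' hne
      obtain ⟨q, hqe, rfl⟩ := mem_image.1 hq'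
      obtain ⟨r, hre, rfl⟩ := mem_image.1 hr'
      have hqr : q ≠ r := by rintro rfl; exact hne rfl
      have hd := hG.2 q (mem_of_mem_erase hqe) r (mem_of_mem_erase hre) hqr
      obtain ⟨_, _, _, hq4, hq5⟩ := hq q hqe
      obtain ⟨_, _, _, hr4, hr5⟩ := hq r hre
      exact ⟨fun h => hd.1 (rho_inj hq4 hr4 h), fun h => hd.2.1 (rho_inj hq4 hr5 h),
        fun h => hd.2.2.1 (rho_inj hq5 hr4 h), fun h => hd.2.2.2 (rho_inj hq5 hr5 h)⟩
    · rw [card_image_of_injOn, card_erase_of_mem hp, hcard]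
      intro q hqe r hre h
      by_contra hqr
      have hd := hG.2 q (mem_of_mem_erase hqe) r (mem_of_mem_erase hre) hqr
      obtain ⟨_, _, _, hq4, _⟩ := hq q hqe
      obtain ⟨_, _, _, hr4, _⟩ := hq r hre
      exact hd.1 (rho_inj hq4 hr4 (congrArg Prod.fst h))
    · intro q' hq' r' hr' h
      obtain ⟨q, hqe, rfl⟩ := mem_image.1 hq'
      obtain ⟨r, hre, rfl⟩ := mem_image.1 hr'
      obtain ⟨_, _, _, _, hq5⟩ := hq q hqe
      obtain ⟨_, _, _, hr4, _⟩ := hq r hre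
      rcases rho_adj hq5 hr4 h with h' | ⟨h', _⟩
      · exact hNA q (mem_of_mem_erase hqe) r (mem_of_mem_erase hre) h'
      · exact hNAi q (mem_of_mem_erase hqe) h'
  · rw [mem_slotsF]
    refine ⟨⟨hi1, hin⟩, ?_⟩
    intro q' hq'
    obtain ⟨q, hqe, rfl⟩ := mem_image.1 hq'
    exact rho_not_adj_i (hq q hqe).2.2.2.2 (hNAi q (mem_of_mem_erase hqe))

lemma bwd_facts {n k : ℕ} (hn : 2 ≤ n) {B : Finset (ℕ × ℕ)} (hB : B ∈ MSet (n - 2) (k - 1))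
    {i : ℕ} (hi : i ∈ slotsF n B) :
    (∀ q ∈ B, 1 ≤ sig i q.1 ∧ sig i q.1 ≤ n - 1 ∧ sig i q.1 ≠ i ∧
      1 ≤ sig i q.2 ∧ sig i q.2 ≤ n - 1 ∧ sig i q.2 ≠ i) ∧
      (i, n) ∉ B.image (pmap (sig i)) := by
  obtain ⟨hG, hcard, hNA⟩ := mem_MSet.1 hB
  have hii := (mem_slotsF.1 hi).1
  have key : ∀ q ∈ B, 1 ≤ sig i q.1 ∧ sig i q.1 ≤ n - 1 ∧ sig i q.1 ≠ i ∧
      1 ≤ sig i q.2 ∧ sig i q.2 ≤ n - 1 ∧ sig i q.2 ≠ i := by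
    intro q hqB
    obtain ⟨h1, h2, h3⟩ := hG.1 q hqB
    obtain ⟨a1, a2, a3⟩ := sig_bounds (n := n) hii.2 h2 (by omega)
    obtain ⟨b1, b2, b3⟩ := sig_bounds (n := n) hii.2 (by omega) h3
    exact ⟨a1, a2, a3, b1, b2, b3⟩
  refine ⟨key, ?_⟩
  intro hmem
  obtain ⟨q, hqB, he⟩ := mem_image.1 hmem
  have : sig i q.2 = n := congrArg Prod.snd he
  have := (key q hqB).2.2.2.2.1
  omega

lemma bwd_mem {n k : ℕ} (hn : 2 ≤ n) (hk : 1 ≤ k) {B : Finset (ℕ × ℕ)}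
    (hB : B ∈ MSet (n - 2) (k - 1)) {i : ℕ} (hi : i ∈ slotsF n B) :
    insert (i, n) (B.image (pmap (sig i))) ∈ MSet n k ∧
      ∃ q ∈ insert (i, n) (B.image (pmap (sig i))), q.2 = n := by
  obtain ⟨hG, hcard, hNA⟩ := mem_MSet.1 hB
  have hii := (mem_slotsF.1 hi).1
  have hslot : ∀ p ∈ B, p.2 + 1 ≠ i := (mem_slotsF.1 hi).2
  obtain ⟨key, hnotmem⟩ := bwd_facts hn hB hi
  constructor
  · rw [mem_MSet]
    refine ⟨⟨?_, ?_⟩, ?_, ?_⟩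
    · intro q' hq'
      rcases mem_insert.1 hq' with rfl | h
      · exact ⟨by omega, by omega, le_refl n⟩
      · obtain ⟨q, hqB, rfl⟩ := mem_image.1 h
        obtain ⟨a1, a2, _, _, b2, _⟩ := key q hqB
        simp only [pmap]
        exact ⟨sig_lt (hG.1 q hqB).1, a1, by omega⟩
    · intro q' hq' r' hr' hne
      rcases mem_insert.1 hq' with rfl | h
      · rcases mem_insert.1 hr' with rfl | h'
        · exact absurd rfl hne
        · obtain ⟨r, hrB, rfl⟩ := mem_image.1 h'
          obtain ⟨_, a2, a3, _, b2, b3⟩ := key r hrB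
          simp only [pmap]
          exact ⟨fun h => a3 h.symm, fun h => b3 h.symm, by omega, by omega⟩
      · rcases mem_insert.1 hr' with rfl | h'
        · obtain ⟨q, hqB, rfl⟩ := mem_image.1 h
          obtain ⟨_, a2, a3, _, b2, b3⟩ := key q hqB
          simp only [pmap]
          exact ⟨a3, by omega, b3, by omega⟩
        · obtain ⟨q, hqB, rfl⟩ := mem_image.1 h
          obtain ⟨r, hrB, rfl⟩ := mem_image.1 h'
          have hqr : q ≠ r := fun he => hne (he ▸ rfl)
          have hd := hG.2 q hqB r hrB hqr
          simp only [pmap]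
          exact ⟨fun h => hd.1 (sig_inj h), fun h => hd.2.1 (sig_inj h),
            fun h => hd.2.2.1 (sig_inj h), fun h => hd.2.2.2 (sig_inj h)⟩
    · rw [card_insert_of_notMem hnotmem, card_image_of_injective _ (pmap_sig_inj i), hcard]
      omega
    · intro q' hq' r' hr' h
      rcases mem_insert.1 hq' with rfl | hq''
      · rcases mem_insert.1 hr' with rfl | hr''
        · simp only at h; omega
        · obtain ⟨r, hrB, rfl⟩ := mem_image.1 hr''
          have := (key r hrB).2.1
          simp only [pmap] at h
          omega
      · rcases mem_insert.1 hr' with rfl | hr''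
        · obtain ⟨q, hqB, rfl⟩ := mem_image.1 hq''
          simp only [pmap] at h
          exact sig_not_adj_i (hslot q hqB) h
        · obtain ⟨q, hqB, rfl⟩ := mem_image.1 hq''
          obtain ⟨r, hrB, rfl⟩ := mem_image.1 hr''
          simp only [pmap] at h
          exact hNA q hqB r hrB (sig_adj h)
  · exact ⟨(i, n), mem_insert_self _ _, rfl⟩

lemma arcN_unique {n k : ℕ} {A : Finset (ℕ × ℕ)} (hA : A ∈ MSet n k)
    {p : ℕ × ℕ} (hp : p ∈ A) (hp2 : p.2 = n) : arcN n A = p := by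
  have h : ∃ q ∈ A, q.2 = n := ⟨p, hp, hp2⟩
  obtain ⟨hq, hq2⟩ := arcN_spec h
  by_contra hne
  have hG := (mem_MSet.1 hA).1
  exact (hG.2 _ hq p hp hne).2.2.2 (hq2.trans hp2.symm)

lemma bwd_fwd_eq {n k : ℕ} (hn : 2 ≤ n) {A : Finset (ℕ × ℕ)} (hA : A ∈ MSet n k)
    {p : ℕ × ℕ} (hp : p ∈ A) (hp2 : p.2 = n) :
    insert (p.1, n) (((A.erase p).image (pmap (rho p.1))).image (pmap (sig p.1))) = A := by
  have hq := erase_facts hA hp hp2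
  rw [Finset.image_image]
  have himg : (A.erase p).image (pmap (sig p.1) ∘ pmap (rho p.1)) = A.erase p := by
    rw [Finset.image_congr (g := id), Finset.image_id]
    intro q hqe
    obtain ⟨_, _, _, h4, h5⟩ := hq q hqe
    simp only [Function.comp_apply, pmap, id_eq]
    rw [sig_rho h4, sig_rho h5]
  rw [himg]
  have : (p.1, n) = p := Prod.ext rfl hp2.symm
  rw [this, Finset.insert_erase hp]

lemma fwd_bwd_eq {n k : ℕ} (hn : 2 ≤ n) {B : Finset (ℕ × ℕ)} (hB : B ∈ MSet (n - 2) (k - 1))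
    {i : ℕ} (hi : i ∈ slotsF n B) :
    ((insert (i, n) (B.image (pmap (sig i)))).erase (i, n)).image (pmap (rho i)) = B := by
  obtain ⟨key, hnotmem⟩ := bwd_facts hn hB hi
  rw [Finset.erase_insert hnotmem, Finset.image_image]
  rw [Finset.image_congr (g := id), Finset.image_id]
  intro q hqB
  simp only [Function.comp_apply, pmap, id_eq]
  rw [rho_sig, rho_sig]

lemma arcN_bwd {n k : ℕ} (hn : 2 ≤ n) (hk : 1 ≤ k) {B : Finset (ℕ × ℕ)}
    (hB : B ∈ MSet (n - 2) (k - 1)) {i : ℕ} (hi : i ∈ slotsF n B) :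
    arcN n (insert (i, n) (B.image (pmap (sig i)))) = (i, n) :=
  arcN_unique (bwd_mem hn hk hB hi).1 (mem_insert_self _ _) rfl

lemma matched_card {n k : ℕ} (hn : 2 ≤ n) (hk : 1 ≤ k) :
    ((MSet n k).filter (fun A => ∃ p ∈ A, p.2 = n)).card
      = ((MSet (n - 2) (k - 1)).sigma (fun B => slotsF n B)).card := by
  apply Finset.card_bij'
    (i := fun A _ => (⟨(A.erase (arcN n A)).image (pmap (rho (arcN n A).1)), (arcN n A).1⟩ :
      (_ : Finset (ℕ × ℕ)) × ℕ))
    (j := fun q _ => insert (q.2, n) (q.1.image (pmap (sig q.2))))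
  · intro A hA
    obtain ⟨hA', hex⟩ := mem_filter.1 hA
    obtain ⟨hpA, hp2⟩ := arcN_spec hex
    obtain ⟨h1, h2⟩ := fwd_mem hn hA' hpA hp2
    exact Finset.mem_sigma.2 ⟨h1, h2⟩
  · intro q hq
    obtain ⟨hB, hi⟩ := Finset.mem_sigma.1 hq
    obtain ⟨h1, h2⟩ := bwd_mem hn hk hB hi
    exact mem_filter.2 ⟨h1, h2⟩
  · intro A hA
    obtain ⟨hA', hex⟩ := mem_filter.1 hA
    obtain ⟨hpA, hp2⟩ := arcN_spec hex
    exact bwd_fwd_eq hn hA' hpA hp2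
  · rintro ⟨B, i⟩ hq
    obtain ⟨hB, hi⟩ := Finset.mem_sigma.1 hq
    simp only at hB hi ⊢
    have h1 := arcN_bwd hn hk hB hi
    rw [h1]
    simp only
    rw [fwd_bwd_eq hn hB hi]

lemma slots_card {n k : ℕ} (hn : 2 ≤ n) (hk : 1 ≤ k) {B : Finset (ℕ × ℕ)}
    (hB : B ∈ MSet (n - 2) (k - 1)) : (slotsF n B).card = n - k := by
  obtain ⟨hG, hcard, hNA⟩ := mem_MSet.1 hB
  have hsd : slotsF n B = Finset.Icc 1 (n - 1) \ (B.image (fun p => p.2 + 1)) := by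
    ext i
    rw [mem_slotsF, mem_sdiff, mem_Icc]
    simp only [mem_image, not_exists, not_and]
    try tauto
  have hsub : B.image (fun p => p.2 + 1) ⊆ Finset.Icc 1 (n - 1) := by
    intro x hx
    obtain ⟨p, hp, rfl⟩ := mem_image.1 hx
    obtain ⟨h1, h2, h3⟩ := hG.1 p hp
    rw [mem_Icc]
    omega
  have himgcard : (B.image (fun p => p.2 + 1)).card = k - 1 := by
    rw [card_image_of_injOn, hcard]
    intro p hp q hq h
    simp only at h
    by_contra hne
    exact (hG.2 p hp q hq hne).2.2.2 (by omega)
  have hle : k - 1 ≤ n - 1 := by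
    calc k - 1 = (B.image (fun p => p.2 + 1)).card := himgcard.symm
      _ ≤ (Finset.Icc 1 (n - 1)).card := card_le_card hsub
      _ = n - 1 := by rw [Nat.card_Icc]; omega
  rw [hsd, card_sdiff_of_subset hsub, himgcard, Nat.card_Icc]
  omega

lemma unmatched_eq {n k : ℕ} (hn : 1 ≤ n) :
    (MSet n k).filter (fun A => ¬ ∃ p ∈ A, p.2 = n) = MSet (n - 1) k := by
  ext A
  rw [mem_filter, mem_MSet, mem_MSet]
  constructor
  · rintro ⟨⟨hG, hcard, hNA⟩, hne⟩
    refine ⟨⟨?_, hG.2⟩, hcard, hNA⟩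
    intro p hp
    obtain ⟨h1, h2, h3⟩ := hG.1 p hp
    have : p.2 ≠ n := fun h => hne ⟨p, hp, h⟩
    exact ⟨h1, h2, by omega⟩
  · rintro ⟨⟨hG, hd⟩, hcard, hNA⟩
    refine ⟨⟨⟨?_, hd⟩, hcard, hNA⟩, ?_⟩
    · intro p hp
      obtain ⟨h1, h2, h3⟩ := hG p hp
      exact ⟨h1, h2, by omega⟩
    · rintro ⟨p, hp, hp2⟩
      have := (hG p hp).2.2
      omega

lemma MSet_rec {n k : ℕ} (hn : 2 ≤ n) (hk : 1 ≤ k) :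
    (MSet n k).card = (MSet (n - 1) k).card + (n - k) * (MSet (n - 2) (k - 1)).card := by
  rw [← Finset.card_filter_add_card_filter_not (s := MSet n k)
    (fun A => ∃ p ∈ A, p.2 = n)]
  rw [matched_card hn hk, Finset.card_sigma,
    Finset.sum_congr rfl (fun B hB => slots_card hn hk hB), Finset.sum_const, smul_eq_mul,
    unmatched_eq (by omega : 1 ≤ n)]
  ring

lemma Pnum_rec {n k : ℕ} (hn : 2 ≤ n) (hk : 1 ≤ k) :
    Pnum n k = Pnum (n - 1) k + (n - k) * Pnum (n - 2) (k - 1) := by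
  rw [Pnum_eq_card, Pnum_eq_card, Pnum_eq_card, MSet_rec hn hk]

lemma Pnum_zero (n : ℕ) : Pnum n 0 = 1 := by
  rw [Pnum_eq_card]
  have : MSet n 0 = {∅} := by
    ext A
    rw [mem_MSet, mem_singleton]
    constructor
    · rintro ⟨_, hcard, _⟩
      exact card_eq_zero.1 hcard
    · rintro rfl
      exact ⟨⟨fun p hp => absurd hp (notMem_empty p), fun p hp => absurd hp (notMem_empty p)⟩,
        card_empty, fun p hp => absurd hp (notMem_empty p)⟩
  rw [this, card_singleton]

lemma endpts_card {n : ℕ} {A : Finset (ℕ × ℕ)} (hG : Good n A) :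
    (endpts A).card = 2 * A.card := by
  rw [endpts, card_biUnion]
  · rw [Finset.sum_congr rfl (fun p hp => ?_), Finset.sum_const, smul_eq_mul, mul_comm]
    rw [card_insert_of_notMem (by simp [Nat.ne_of_lt (hG.1 p hp).1]), card_singleton]
  · intro p hp q hq hne
    rw [Function.onFun, Finset.disjoint_left]
    intro x hxp hxq
    have hd := hG.2 p hp q hq hne
    simp only [mem_insert, mem_singleton] at hxp hxq
    rcases hxp with rfl | rfl <;> rcases hxq with h | h <;> omega

lemma Pnum_vanish {n k : ℕ} (h : n < 2 * k) : Pnum n k = 0 := by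
  rw [Pnum_eq_card]
  rw [Finset.card_eq_zero]
  by_contra hne
  obtain ⟨A, hA⟩ := Finset.nonempty_iff_ne_empty.2 hne
  obtain ⟨hG, hcard, _⟩ := mem_MSet.1 hA
  have h1 : (endpts A).card = 2 * k := by rw [endpts_card hG, hcard]
  have h2 : endpts A ⊆ Finset.Icc 1 n := by
    intro x hx
    obtain ⟨p, hp, hxp⟩ := mem_biUnion.1 hx
    obtain ⟨a1, a2, a3⟩ := hG.1 p hp
    simp only [mem_insert, mem_singleton] at hxp
    rw [mem_Icc]
    rcases hxp with rfl | rfl <;> omega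
  have := card_le_card h2
  rw [h1, Nat.card_Icc] at this
  omega


open Polynomial in
/-- The generating polynomial of the numbers `P(n,k)`. -/
noncomputable def fpoly (n : ℕ) : Polynomial ℤ :=
  ∑ k ∈ Finset.range (n / 2 + 1), Polynomial.C (Pnum n k : ℤ) * Polynomial.X ^ k

lemma coeff_fpoly (n j : ℕ) : (fpoly n).coeff j = (Pnum n j : ℤ) := by
  rw [fpoly, Polynomial.finset_sum_coeff]
  simp only [Polynomial.coeff_C_mul, Polynomial.coeff_X_pow, mul_ite, mul_one, mul_zero]
  rw [Finset.sum_ite_eq (Finset.range (n / 2 + 1)) j (fun k => (Pnum n k : ℤ))]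
  split
  · rfl
  · rename_i h
    rw [Finset.mem_range, not_lt] at h
    rw [Pnum_vanish (by omega)]
    simp


open Polynomial in
/-- Recurrence for the polynomials `f_n(y) = ∑_k P(n,k) y^k`. -/
theorem stmt_3 (n : ℕ) (hn : 3 ≤ n) :
    fpoly n = fpoly (n - 1) + Polynomial.C ((n : ℤ) - 1) * Polynomial.X * fpoly (n - 2)
      - Polynomial.X ^ 2 * Polynomial.derivative (fpoly (n - 2)) := by
  apply Polynomial.ext
  intro j
  rw [Polynomial.coeff_sub, Polynomial.coeff_add, coeff_fpoly, coeff_fpoly]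
  have h2 : (Polynomial.C ((n : ℤ) - 1) * Polynomial.X * fpoly (n - 2)).coeff j
      = ((n : ℤ) - 1) * (if 1 ≤ j then (Pnum (n - 2) (j - 1) : ℤ) else 0) := by
    rw [mul_assoc, Polynomial.coeff_C_mul]
    congr 1
    rcases j with _ | m
    · simp [Polynomial.mul_coeff_zero]
    · rw [Polynomial.coeff_X_mul, coeff_fpoly]
      simp
  have h3 : (Polynomial.X ^ 2 * Polynomial.derivative (fpoly (n - 2))).coeff j
      = if 2 ≤ j then (Pnum (n - 2) (j - 1) : ℤ) * ((j : ℤ) - 1) else 0 := by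
    rw [mul_comm, Polynomial.coeff_mul_X_pow']
    split
    · rename_i hj
      rw [Polynomial.coeff_derivative, coeff_fpoly]
      have he : j - 2 + 1 = j - 1 := by omega
      rw [he]
      congr 1
      push_cast
      omega
    · rfl
  rw [h2, h3]
  rcases Nat.eq_zero_or_pos j with rfl | hj
  · rw [if_neg (by omega), if_neg (by omega), Pnum_zero, Pnum_zero]
    ring
  · have hrec := Pnum_rec (show 2 ≤ n by omega) hj
    rw [if_pos (show 1 ≤ j from hj)]
    by_cases hz : Pnum (n - 2) (j - 1) = 0
    · rw [hrec, hz]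
      simp
    · have hbound : ¬ (n - 2 < 2 * (j - 1)) := fun h => hz (Pnum_vanish h)
      have hjn : j ≤ n := by omega
      rw [hrec]
      push_cast [Nat.cast_sub hjn]
      by_cases hj2 : 2 ≤ j
      · rw [if_pos hj2]
        ring
      · rw [if_neg hj2]
        have : j = 1 := by omega
        subst this
        push_cast
        ring
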